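/- If C and C' are disjoint δ-clean clusters (with δ < 1/9) and X is any set of vertices, then it is impossible for both a vertex v1 ∈ C and a vertex v2 ∈ C' to be 3δ-good with respect to X. -/
import Mathlib


attribute [local instance] Classical.propDecidable

/-- `N⁺(v)`: the vertex `v` together with all vertices joined to it by a positive edge. -/
def Nplus {V : Type*} [Fintype V] [DecidableEq V] (pos : V → V → Bool) (v : V) : Finset V :=
  insert v (Finset.univ.filter (fun u => pos u v = true))

/-- `v` is `δ`-good with respect to `C`: `|N⁺(v) ∩ C| ≥ (1-δ)|C|` and `|N⁺(v) ∩ (V \ C)| ≤ δ|C|`. -/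
def IsGood {V : Type*} [Fintype V] [DecidableEq V]
    (pos : V → V → Bool) (δ : ℝ) (v : V) (C : Finset V) : Prop :=
  (1 - δ) * (C.card : ℝ) ≤ ((Nplus pos v ∩ C).card : ℝ) ∧
  ((Nplus pos v ∩ Cᶜ).card : ℝ) ≤ δ * (C.card : ℝ)

/-- A set `C` is `δ`-clean if every vertex of `C` is `δ`-good with respect to `C`. -/
def IsClean {V : Type*} [Fintype V] [DecidableEq V]
    (pos : V → V → Bool) (δ : ℝ) (C : Finset V) : Prop :=
  ∀ v ∈ C, IsGood pos δ v C

private lemma card_split {V : Type*} [Fintype V] [DecidableEq V] (S T : Finset V) :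
    (S.card : ℝ) ≤ ((S ∩ T).card : ℝ) + ((S ∩ Tᶜ).card : ℝ) := by
  have hsub : S ⊆ (S ∩ T) ∪ (S ∩ Tᶜ) := by
    intro x hx
    by_cases h : x ∈ T <;> simp [hx, h]
  have h1 : S.card ≤ ((S ∩ T) ∪ (S ∩ Tᶜ)).card := Finset.card_le_card hsub
  have h2 : ((S ∩ T) ∪ (S ∩ Tᶜ)).card ≤ (S ∩ T).card + (S ∩ Tᶜ).card :=
    Finset.card_union_le _ _
  exact_mod_cast h1.trans h2

/-- Key counting bounds: if `v` is `δ`-good w.r.t. `C` and `3δ`-good w.r.t. `X`, then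
`|C ∩ X|` is large from both sides. -/
private lemma key_bounds {V : Type*} [Fintype V] [DecidableEq V]
    (pos : V → V → Bool) (δ : ℝ) (v : V) (C X : Finset V)
    (hg : IsGood pos δ v C) (hx : IsGood pos (3 * δ) v X) :
    (1 - δ) * (C.card : ℝ) - 3 * δ * (X.card : ℝ) ≤ ((C ∩ X).card : ℝ) ∧
    (1 - 3 * δ) * (X.card : ℝ) - δ * (C.card : ℝ) ≤ ((C ∩ X).card : ℝ) := by
  set N := Nplus pos v with hN
  constructor
  · -- |N∩C| ≤ |C∩X| + |N∩Xᶜ|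
    have h1 := card_split (N ∩ C) X
    have h2 : ((N ∩ C ∩ X).card : ℝ) ≤ ((C ∩ X).card : ℝ) := by
      exact_mod_cast Finset.card_le_card (by intro x hx; simp at hx ⊢; tauto)
    have h3 : ((N ∩ C ∩ Xᶜ).card : ℝ) ≤ ((N ∩ Xᶜ).card : ℝ) := by
      exact_mod_cast Finset.card_le_card (by intro x hx; simp at hx ⊢; tauto)
    have := hg.1
    have := hx.2
    linarith
  · -- |N∩X| ≤ |C∩X| + |N∩Cᶜ|
    have h1 := card_split (N ∩ X) C
    have h2 : ((N ∩ X ∩ C).card : ℝ) ≤ ((C ∩ X).card : ℝ) := by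
      exact_mod_cast Finset.card_le_card (by intro x hx; simp at hx ⊢; tauto)
    have h3 : ((N ∩ X ∩ Cᶜ).card : ℝ) ≤ ((N ∩ Cᶜ).card : ℝ) := by
      exact_mod_cast Finset.card_le_card (by intro x hx; simp at hx ⊢; tauto)
    have := hx.1
    have := hg.2
    linarith

/-- If `C` and `C'` are disjoint `δ`-clean clusters with `δ < 1/9` and `X` is any set of
vertices, then a vertex `v₁ ∈ C` and a vertex `v₂ ∈ C'` cannot both be `3δ`-good w.r.t. `X`. -/
theorem not_both_good {V : Type*} [Fintype V] [DecidableEq V]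
    (pos : V → V → Bool) (hsym : ∀ u v, pos u v = pos v u)
    (δ : ℝ) (hδ : δ < 1/9)
    (C C' X : Finset V) (hdisj : Disjoint C C')
    (hC : IsClean pos δ C) (hC' : IsClean pos δ C')
    (v₁ v₂ : V) (hv₁ : v₁ ∈ C) (hv₂ : v₂ ∈ C') :
    ¬ (IsGood pos (3 * δ) v₁ X ∧ IsGood pos (3 * δ) v₂ X) := by
  rintro ⟨hx1, hx2⟩
  have hg1 := hC v₁ hv₁
  have hg2 := hC' v₂ hv₂
  obtain ⟨hA2, hA1⟩ := key_bounds pos δ v₁ C X hg1 hx1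
  obtain ⟨hB2, hB1⟩ := key_bounds pos δ v₂ C' X hg2 hx2
  -- δ ≥ 0
  have hc1 : (1 : ℝ) ≤ (C.card : ℝ) := by
    exact_mod_cast Finset.card_pos.mpr ⟨v₁, hv₁⟩
  have hc2 : (1 : ℝ) ≤ (C'.card : ℝ) := by
    exact_mod_cast Finset.card_pos.mpr ⟨v₂, hv₂⟩
  have hδ0 : 0 ≤ δ := by
    have h0 : (0 : ℝ) ≤ ((Nplus pos v₁ ∩ Cᶜ).card : ℝ) := by positivity
    nlinarith [hg1.2]
  -- |C∩X| + |C'∩X| ≤ |X|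
  have hdX : Disjoint (C ∩ X) (C' ∩ X) :=
    Finset.disjoint_left.mpr (by
      intro a ha hb
      simp only [Finset.mem_inter] at ha hb
      exact (Finset.disjoint_left.mp hdisj ha.1) hb.1)
  have hsum : ((C ∩ X).card : ℝ) + ((C' ∩ X).card : ℝ) ≤ (X.card : ℝ) := by
    have h1 : (C ∩ X) ∪ (C' ∩ X) ⊆ X := by
      intro a ha; simp at ha; tauto
    have h2 := Finset.card_le_card h1
    rw [Finset.card_union_of_disjoint hdX] at h2
    exact_mod_cast h2
  have hx0 : (0 : ℝ) ≤ (X.card : ℝ) := by positivity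
  nlinarith [mul_nonneg hδ0 hx0, mul_nonneg hδ0 (by linarith : (0:ℝ) ≤ (C.card:ℝ) + (C'.card:ℝ)),
    mul_nonneg (mul_nonneg hδ0 hδ0) hx0,
    mul_nonneg (mul_nonneg hδ0 hδ0) (by linarith : (0:ℝ) ≤ (C.card:ℝ) + (C'.card:ℝ))]
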